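/- arXiv:2410.04887 — 3 statements merged into one kernel-verified Lean document; each statement's English description precedes it below -/
import Mathlib

section
/- Let A ∈ ℝ^{K×n} and B ∈ ℝ^{n×m} be real matrices with ‖A^⊤A − BB^⊤‖_op ≤ ε, and let P = A^+A be the orthogonal projection onto the row space of A (A^+ the Moore–Penrose pseudoinverse). Then ‖(I_n − P)B‖_F² ≤ tr(I_n − P)·ε ≤ n·ε. -/
open Matrix Finset Real

/-- Frobenius norm of a real matrix. -/
noncomputable def frobNorm {m n : ℕ} (A : Matrix (Fin m) (Fin n) ℝ) : ℝ :=
  Real.sqrt (∑ i, ∑ j, (A i j) ^ 2)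

/-- Operator (spectral) norm of a real matrix. -/
noncomputable def opNorm {m n : ℕ} (A : Matrix (Fin m) (Fin n) ℝ) : ℝ :=
  sSup {x : ℝ | ∃ v : Fin n → ℝ, (∑ i, v i ^ 2) ≤ 1 ∧ x = Real.sqrt (∑ i, (A.mulVec v i) ^ 2)}

theorem Matrix.isHermitian_transpose_mul_self {m n : Type*} [Fintype m]
    (A : Matrix m n ℝ) : (Aᵀ * A).IsHermitian := by
  rw [Matrix.IsHermitian, Matrix.conjTranspose_mul]
  simp [Matrix.conjTranspose_eq_transpose_of_trivial]

/-- The singular values of a real matrix, in non-increasing order (indexed by columns). -/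
noncomputable def svals {m n : ℕ} (A : Matrix (Fin m) (Fin n) ℝ) : Fin n → ℝ := fun i =>
  Real.sqrt ((Matrix.isHermitian_transpose_mul_self A).eigenvalues
    (Tuple.sort ((Matrix.isHermitian_transpose_mul_self A).eigenvalues) i.rev))

/-- `sval A k` is the `k`-th largest singular value of `A` (1-indexed). -/
noncomputable def sval {m n : ℕ} (A : Matrix (Fin m) (Fin n) ℝ) (k : ℕ) : ℝ :=
  if h : k - 1 < n then svals A ⟨k - 1, h⟩ else 0

/-- Smallest singular value of a (possibly rectangular) matrix. -/
noncomputable def smin {m n : ℕ} (A : Matrix (Fin m) (Fin n) ℝ) : ℝ :=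
  sval A (min m n)

/-- Condition number: the ratio between the largest and the smallest *nonzero*
singular values, i.e. the supremum of ratios of nonzero singular values. -/
noncomputable def kappa {m n : ℕ} (A : Matrix (Fin m) (Fin n) ℝ) : ℝ :=
  sSup {x : ℝ | ∃ i j : Fin n, svals A i ≠ 0 ∧ svals A j ≠ 0 ∧ x = svals A i / svals A j}

/-- `B` is the Moore–Penrose pseudoinverse of `A`. -/
def IsMPInv {m n : ℕ} (A : Matrix (Fin m) (Fin n) ℝ) (B : Matrix (Fin n) (Fin m) ℝ) : Prop :=
  A * B * A = A ∧ B * A * B = B ∧ (A * B)ᵀ = A * B ∧ (B * A)ᵀ = B * A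

lemma opSet_bddAbove {p q : ℕ} (M : Matrix (Fin p) (Fin q) ℝ) :
    BddAbove {x : ℝ | ∃ v : Fin q → ℝ, (∑ i, v i ^ 2) ≤ 1 ∧
      x = Real.sqrt (∑ i, (M.mulVec v i) ^ 2)} := by
  refine ⟨Real.sqrt (∑ i, ∑ j, M i j ^ 2), ?_⟩
  rintro x ⟨v, hv, rfl⟩
  apply Real.sqrt_le_sqrt
  apply Finset.sum_le_sum
  intro i _
  calc (M.mulVec v i) ^ 2 = (∑ j, M i j * v j) ^ 2 := by
        simp [Matrix.mulVec, dotProduct]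
    _ ≤ (∑ j, M i j ^ 2) * (∑ j, v j ^ 2) := Finset.sum_mul_sq_le_sq_mul_sq _ _ _
    _ ≤ (∑ j, M i j ^ 2) * 1 := mul_le_mul_of_nonneg_left hv (by positivity)
    _ = ∑ j, M i j ^ 2 := mul_one _

lemma opNorm_nonneg {p q : ℕ} (M : Matrix (Fin p) (Fin q) ℝ) : 0 ≤ opNorm M := by
  apply le_csSup (opSet_bddAbove M)
  exact ⟨0, by simp, by simp [Matrix.mulVec_zero]⟩

lemma mulVec_norm_le {p q : ℕ} (M : Matrix (Fin p) (Fin q) ℝ) (v : Fin q → ℝ) :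
    Real.sqrt (∑ i, (M.mulVec v i) ^ 2) ≤ opNorm M * Real.sqrt (∑ i, v i ^ 2) := by
  by_cases h : (∑ i, v i ^ 2) = 0
  · have hv : v = 0 := by
      funext i
      have := (Finset.sum_eq_zero_iff_of_nonneg (fun i _ => sq_nonneg (v i))).mp h i (by simp)
      exact pow_eq_zero_iff (by norm_num) |>.mp this
    simp [hv, Matrix.mulVec_zero]
  · have hpos : 0 < ∑ i, v i ^ 2 := lt_of_le_of_ne (by positivity) (Ne.symm h)
    set s := Real.sqrt (∑ i, v i ^ 2) with hs
    have hspos : 0 < s := Real.sqrt_pos.mpr hpos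
    have hs2 : s ^ 2 = ∑ i, v i ^ 2 := Real.sq_sqrt hpos.le
    set w : Fin q → ℝ := s⁻¹ • v with hw
    have hw1 : (∑ i, w i ^ 2) = 1 := by
      simp only [hw, Pi.smul_apply, smul_eq_mul, mul_pow, ← Finset.mul_sum, ← hs2]
      field_simp
    have hmem : Real.sqrt (∑ i, (M.mulVec w i) ^ 2) ≤ opNorm M :=
      le_csSup (opSet_bddAbove M) ⟨w, hw1.le, rfl⟩
    have hMw : ∀ i, M.mulVec w i = s⁻¹ * M.mulVec v i := by
      intro i; rw [hw, Matrix.mulVec_smul]; simp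
    have hcalc : Real.sqrt (∑ i, (M.mulVec w i) ^ 2)
        = s⁻¹ * Real.sqrt (∑ i, (M.mulVec v i) ^ 2) := by
      simp only [hMw, mul_pow, ← Finset.mul_sum]
      rw [Real.sqrt_mul (by positivity), Real.sqrt_sq (by positivity : (0:ℝ) ≤ s⁻¹)]
    rw [hcalc] at hmem
    calc Real.sqrt (∑ i, (M.mulVec v i) ^ 2)
        = s * (s⁻¹ * Real.sqrt (∑ i, (M.mulVec v i) ^ 2)) := by
          field_simp
      _ ≤ s * opNorm M := by
          apply mul_le_mul_of_nonneg_left hmem hspos.le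
      _ = opNorm M * s := mul_comm _ _

lemma quad_bound {q : ℕ} (M : Matrix (Fin q) (Fin q) ℝ) (v : Fin q → ℝ) :
    -(∑ i, v i * M.mulVec v i) ≤ opNorm M * ∑ i, v i ^ 2 := by
  have h1 : |∑ i, v i * M.mulVec v i| ≤
      Real.sqrt (∑ i, v i ^ 2) * Real.sqrt (∑ i, (M.mulVec v i) ^ 2) := by
    rw [← Real.sqrt_mul_self (abs_nonneg _), ← Real.sqrt_mul (by positivity)]
    apply Real.sqrt_le_sqrt
    rw [abs_mul_abs_self, ← sq]
    exact Finset.sum_mul_sq_le_sq_mul_sq _ _ _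
  have h2 := mulVec_norm_le M v
  have h3 : Real.sqrt (∑ i, v i ^ 2) * Real.sqrt (∑ i, (M.mulVec v i) ^ 2)
      ≤ opNorm M * ∑ i, v i ^ 2 := by
    calc Real.sqrt (∑ i, v i ^ 2) * Real.sqrt (∑ i, (M.mulVec v i) ^ 2)
        ≤ Real.sqrt (∑ i, v i ^ 2) * (opNorm M * Real.sqrt (∑ i, v i ^ 2)) :=
          mul_le_mul_of_nonneg_left h2 (Real.sqrt_nonneg _)
      _ = opNorm M * (Real.sqrt (∑ i, v i ^ 2) * Real.sqrt (∑ i, v i ^ 2)) := by ring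
      _ = opNorm M * ∑ i, v i ^ 2 := by rw [Real.mul_self_sqrt (by positivity)]
  linarith [neg_abs_le (∑ i, v i * M.mulVec v i)]

/-- if `‖AᵀA − BBᵀ‖_op ≤ ε`, the part of `B` in the kernel of `A`
(i.e. `(I − A⁺A)B`) is small in Frobenius norm. -/
theorem statement5
    (K n m : ℕ)
    (A : Matrix (Fin K) (Fin n) ℝ) (B : Matrix (Fin n) (Fin m) ℝ)
    (ε : ℝ)
    (hε : opNorm (Aᵀ * A - B * Bᵀ) ≤ ε)
    (Ap : Matrix (Fin n) (Fin K) ℝ)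
    (hAp : IsMPInv A Ap) :
    frobNorm (((1 : Matrix (Fin n) (Fin n) ℝ) - Ap * A) * B) ^ 2 ≤
      Matrix.trace ((1 : Matrix (Fin n) (Fin n) ℝ) - Ap * A) * ε ∧
    Matrix.trace ((1 : Matrix (Fin n) (Fin n) ℝ) - Ap * A) * ε ≤ (n : ℝ) * ε := by
  set M : Matrix (Fin n) (Fin n) ℝ := Aᵀ * A - B * Bᵀ with hM
  set P : Matrix (Fin n) (Fin n) ℝ := Ap * A with hP
  set Q : Matrix (Fin n) (Fin n) ℝ := 1 - Ap * A with hQ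
  have hεnn : 0 ≤ ε := le_trans (opNorm_nonneg M) hε
  have hPT : Pᵀ = P := hAp.2.2.2
  have hPP : P * P = P := by
    rw [hP, Matrix.mul_assoc Ap A (Ap * A), ← Matrix.mul_assoc A Ap A, hAp.1]
  have hQT : Qᵀ = Q := by
    rw [hQ, Matrix.transpose_sub, Matrix.transpose_one, hAp.2.2.2]
  have hQQ : Q * Q = Q := by
    rw [hQ, sub_mul, one_mul, mul_sub, mul_one, ← hP, hPP]
    abel
  have hAQ : A * Q = 0 := by
    rw [hQ]
    rw [Matrix.mul_sub, Matrix.mul_one, ← Matrix.mul_assoc, hAp.1, sub_self]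
  have hQAt : Q * Aᵀ = 0 := by
    have h := congrArg Matrix.transpose hAQ
    rw [Matrix.transpose_mul, hQT] at h
    simpa using h
  have hsym : ∀ a b, Q a b = Q b a := by
    intro a b
    conv_lhs => rw [← hQT]
    simp [Matrix.transpose_apply]
  -- symmetry of P entries
  have hsymP : ∀ a b, P a b = P b a := by
    intro a b
    conv_lhs => rw [← hPT]
    simp [Matrix.transpose_apply]
  -- the matrix identity
  have hid : Q * B * Bᵀ * Q = -(Q * M * Q) := by
    have h1 : Q * (Aᵀ * A) = 0 := by rw [← Matrix.mul_assoc, hQAt, Matrix.zero_mul]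
    rw [hM, mul_sub Q (Aᵀ * A) (B * Bᵀ), h1, zero_sub, neg_mul, neg_neg,
      Matrix.mul_assoc Q B Bᵀ]
  -- diagonal bound via quadratic forms
  have hdiag : ∀ i, -((Q * M * Q) i i) ≤ opNorm M * ∑ j, (Q j i) ^ 2 := by
    intro i
    have hrepr : (Q * M * Q) i i = ∑ j, (fun j => Q j i) j * M.mulVec (fun j => Q j i) j := by
      simp only [Matrix.mul_apply, Matrix.mulVec, dotProduct, Finset.sum_mul,
        Finset.mul_sum]
      rw [Finset.sum_comm]
      refine Finset.sum_congr rfl fun j _ => Finset.sum_congr rfl fun k _ => ?_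
      rw [hsym i j]
      ring
    rw [hrepr]
    exact quad_bound M _
  -- trace of Q equals sum of squares of entries
  have htrQ : Matrix.trace Q = ∑ i, ∑ j, (Q j i) ^ 2 := by
    conv_lhs => rw [← hQQ]
    simp only [Matrix.trace, Matrix.diag, Matrix.mul_apply]
    refine Finset.sum_congr rfl fun i _ => Finset.sum_congr rfl fun j _ => ?_
    rw [hsym i j, sq]
  -- frobNorm squared equals trace
  have hfrob : frobNorm (Q * B) ^ 2 = Matrix.trace (Q * B * Bᵀ * Q) := by
    rw [frobNorm, Real.sq_sqrt (by positivity)]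
    have : Q * B * Bᵀ * Q = (Q * B) * (Q * B)ᵀ := by
      rw [Matrix.transpose_mul, hQT, Matrix.mul_assoc (Q * B) Bᵀ Q]
    rw [this]
    simp only [Matrix.trace, Matrix.diag, Matrix.mul_apply, Matrix.transpose_apply, sq]
  have hkey : frobNorm (Q * B) ^ 2 ≤ ε * Matrix.trace Q := by
    rw [hfrob, hid, Matrix.trace_neg]
    have h1 : -Matrix.trace (Q * M * Q) = ∑ i, -((Q * M * Q) i i) := by
      simp [Matrix.trace, Matrix.diag]
    rw [h1, htrQ, Finset.mul_sum]
    refine Finset.sum_le_sum fun i _ => le_trans (hdiag i) ?_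
    exact mul_le_mul_of_nonneg_right hε (by positivity)
  -- trace Q ≤ n
  have hQdiag_le : ∀ i, Q i i ≤ 1 := by
    intro i
    have hdd : Q i i = 1 - P i i := by simp [hQ, hP, Matrix.sub_apply, Matrix.one_apply]
    have hPnn : 0 ≤ P i i := by
      have : P i i = ∑ j, (P i j) ^ 2 := by
        conv_lhs => rw [← hPP]
        simp only [Matrix.mul_apply]
        refine Finset.sum_congr rfl fun j _ => ?_
        rw [hsymP j i, sq]
      rw [this]; positivity
    linarith
  have htrQn : Matrix.trace Q ≤ (n : ℝ) := by
    calc Matrix.trace Q = ∑ i, Q i i := by simp [Matrix.trace, Matrix.diag]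
      _ ≤ ∑ _i : Fin n, (1 : ℝ) := Finset.sum_le_sum fun i _ => hQdiag_le i
      _ = (n : ℝ) := by simp
  constructor
  · rw [mul_comm (Matrix.trace Q) ε]
    exact hkey
  · exact mul_le_mul_of_nonneg_right htrQn hεnn
end

section
/- Let C_0 : ℝ^P → ℝ be a nonnegative differentiable function satisfying the α-Polyak–Łojasiewicz inequality ‖∇C_0(θ)‖₂² ≥ (α/2)C_0(θ) for all θ in the closed ball B(θ_0, r_0). Then for any λ > 0, the regularized function C_λ(θ) = C_0(θ) + (λ/2)‖θ‖₂² satisfies, for all θ ∈ B(θ_0, r_0), the shifted inequality ‖∇C_λ(θ)‖₂² ≥ (α/4)(C_λ(θ) − λ m_λ), where m_λ = (1 + √(4λ/α))²(‖θ_0‖₂ + r_0)². -/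
open Real

set_option maxHeartbeats 1000000 in
/-- Proposition 4.2, first part: if `C₀` satisfies the `α`-PL inequality on a
ball, then the `λ`-regularized cost satisfies a shifted `α/4`-PL inequality on the same ball. -/
theorem statement8
    (P : ℕ)
    (C0 : EuclideanSpace ℝ (Fin P) → ℝ)
    (θ0 : EuclideanSpace ℝ (Fin P))
    (r0 α lam : ℝ)
    (hr0 : 0 < r0) (hα : 0 < α) (hlam : 0 < lam)
    (hC0nonneg : ∀ θ, 0 ≤ C0 θ)
    (hdiff : Differentiable ℝ C0)
    (hPL : ∀ θ ∈ Metric.closedBall θ0 r0, (α / 2) * C0 θ ≤ ‖gradient C0 θ‖ ^ 2) :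
    ∀ θ ∈ Metric.closedBall θ0 r0,
      (α / 4) * ((C0 θ + (lam / 2) * ‖θ‖ ^ 2) -
          lam * ((1 + Real.sqrt (4 * lam / α)) ^ 2 * (‖θ0‖ + r0) ^ 2)) ≤
        ‖gradient (fun θ => C0 θ + (lam / 2) * ‖θ‖ ^ 2) θ‖ ^ 2 := by
  intro θ hθ
  -- compute the gradient of the regularized cost
  have hgrad : gradient (fun θ => C0 θ + (lam / 2) * ‖θ‖ ^ 2) θ
      = gradient C0 θ + lam • θ := by
    have h1 : HasFDerivAt C0 (InnerProductSpace.toDual ℝ _ (gradient C0 θ)) θ :=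
      ((hdiff θ).hasGradientAt).hasFDerivAt
    have h2 : HasFDerivAt (fun x : EuclideanSpace ℝ (Fin P) => (lam / 2) * ‖x‖ ^ 2)
        (InnerProductSpace.toDual ℝ _ (lam • θ)) θ := by
      have := ((hasStrictFDerivAt_norm_sq θ).hasFDerivAt).const_mul (lam / 2)
      refine this.congr_fderiv ?_
      ext y
      simp [InnerProductSpace.toDual_apply_apply, real_inner_smul_left,
        ContinuousLinearMap.smul_apply, innerSL_apply_apply]
      ring
    have h3 : HasGradientAt (fun θ => C0 θ + (lam / 2) * ‖θ‖ ^ 2)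
        (gradient C0 θ + lam • θ) θ := by
      rw [hasGradientAt_iff_hasFDerivAt, map_add]
      exact h1.add h2
    exact h3.gradient
  rw [hgrad]
  set g := gradient C0 θ with hg
  set s := Real.sqrt (4 * lam / α) with hs
  have hs0 : 0 ≤ s := Real.sqrt_nonneg _
  have hs2 : s ^ 2 = 4 * lam / α := Real.sq_sqrt (by positivity)
  have hαs : α * s ^ 2 = 4 * lam := by
    rw [hs2]; field_simp
  -- bound on ‖θ‖
  have hθR : ‖θ‖ ≤ ‖θ0‖ + r0 := by
    have : ‖θ - θ0‖ ≤ r0 := by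
      rw [← dist_eq_norm]; exact Metric.mem_closedBall.mp hθ
    calc ‖θ‖ = ‖θ0 + (θ - θ0)‖ := by congr 1; abel
      _ ≤ ‖θ0‖ + ‖θ - θ0‖ := norm_add_le _ _
      _ ≤ ‖θ0‖ + r0 := by linarith
  have hθ0 : 0 ≤ ‖θ‖ := norm_nonneg _
  -- ‖g + lam • θ‖² ≥ ‖g‖²/2 - lam²‖θ‖²
  have htri : ‖g‖ ≤ ‖g + lam • θ‖ + lam * ‖θ‖ := by
    have := norm_add_le (g + lam • θ) (-(lam • θ))
    simp only [add_neg_cancel_right, norm_neg, norm_smul, Real.norm_eq_abs,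
      abs_of_pos hlam] at this
    exact this
  have hlow : ‖g‖ ^ 2 / 2 - lam ^ 2 * ‖θ‖ ^ 2 ≤ ‖g + lam • θ‖ ^ 2 := by
    have hsq : ‖g‖ ^ 2 ≤ (‖g + lam • θ‖ + lam * ‖θ‖) ^ 2 := by
      have h1 : 0 ≤ ‖g + lam • θ‖ + lam * ‖θ‖ := by positivity
      nlinarith [norm_nonneg g]
    nlinarith [sq_nonneg (‖g + lam • θ‖ - lam * ‖θ‖)]
  have hplθ : (α / 2) * C0 θ ≤ ‖g‖ ^ 2 := hPL θ hθ
  have hC0 : 0 ≤ C0 θ := hC0nonneg θ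
  have key1 : α / 8 + lam ≤ (α / 4) * (1 + s) ^ 2 := by
    nlinarith [mul_nonneg hα.le hs0]
  have key2 : lam * ‖θ‖ ^ 2 * (α / 8 + lam) ≤
      lam * (‖θ0‖ + r0) ^ 2 * ((α / 4) * (1 + s) ^ 2) := by
    have ht2 : ‖θ‖ ^ 2 ≤ (‖θ0‖ + r0) ^ 2 := by nlinarith
    have h8 : (0:ℝ) ≤ α / 8 + lam := by positivity
    have h4 : (0:ℝ) ≤ (α / 4) * (1 + s) ^ 2 := by positivity
    gcongr
  nlinarith [key2, hlow, hplθ, hC0, hα.le]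
end

section
/- Let C_0 : ℝ^P → ℝ be a nonnegative differentiable function satisfying ‖∇C_0(θ)‖₂² ≥ (α/2)C_0(θ) for all θ ∈ B(θ_0, r_0), let λ > 0, and set C_λ(θ) = C_0(θ) + (λ/2)‖θ‖₂² and m_λ = (1 + √(4λ/α))²(‖θ_0‖₂ + r_0)². Assume r_0 ≥ 8√(C_λ(θ_0)/α), ∇C_0 is β1-Lipschitz on B(θ_0, r_0), C_λ(θ_0) > 2λ m_λ, and let 0 < η < 1/(2β1). Then there exists k1 ≤ ⌈log(λ m_λ/(C_λ(θ_0) − λ m_λ)) / log(1 − ηα/8)⌉ such that the gradient descent iterates θ_{k+1} = θ_k − η∇C_λ(θ_k) satisfy C_λ(θ_{k1}) ≤ 2λ m_λ and ‖θ_{k1} − θ_0‖₂ ≤ 8√(C_λ(θ_0)/α) ≤ r_0. -/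
open Real


variable {E : Type*} [NormedAddCommGroup E] [InnerProductSpace ℝ E] [CompleteSpace E]

lemma lineHasDerivAt (f : E → ℝ) (hf : Differentiable ℝ f) (x v : E) (t : ℝ) :
    HasDerivAt (fun s : ℝ => f (x + s • v)) (inner ℝ (gradient f (x + t • v)) v : ℝ) t := by
  have hline : HasDerivAt (fun s : ℝ => x + s • v) v t := by
    simpa using ((hasDerivAt_id t).smul_const v).const_add x
  have hF := (hf (x + t • v)).hasGradientAt.hasFDerivAt
  have := hF.comp_hasDerivAt t hline
  rw [InnerProductSpace.toDual_apply_apply] at this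
  exact this

lemma descent_lemma (f : E → ℝ) (hf : Differentiable ℝ f) (L : ℝ) (x y : E)
    (hL : ∀ t ∈ Set.Icc (0:ℝ) 1,
      ‖gradient f (x + t • (y - x)) - gradient f x‖ ≤ L * (t * ‖y - x‖)) :
    f y ≤ f x + (inner ℝ (gradient f x) (y - x) : ℝ) + L / 2 * ‖y - x‖ ^ 2 := by
  set v := y - x with hv
  set φ : ℝ → ℝ := fun t => f (x + t • v) - t * (inner ℝ (gradient f x) v : ℝ)
    - L * ‖v‖ ^ 2 / 2 * t ^ 2 with hφ
  have hφd : ∀ t : ℝ, HasDerivAt φ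
      ((inner ℝ (gradient f (x + t • v)) v : ℝ) - (inner ℝ (gradient f x) v : ℝ)
        - L * ‖v‖ ^ 2 * t) t := by
    intro t
    have h1 := lineHasDerivAt f hf x v t
    have h2 : HasDerivAt (fun t : ℝ => t * (inner ℝ (gradient f x) v : ℝ))
        (inner ℝ (gradient f x) v : ℝ) t := by
      simpa using (hasDerivAt_id t).mul_const (inner ℝ (gradient f x) v : ℝ)
    have h3 : HasDerivAt (fun t : ℝ => L * ‖v‖ ^ 2 / 2 * t ^ 2) (L * ‖v‖ ^ 2 * t) t := by
      have := (hasDerivAt_pow 2 t).const_mul (L * ‖v‖ ^ 2 / 2)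
      exact this.congr_deriv (by ring)
    exact (h1.sub h2).sub h3
  have hanti : AntitoneOn φ (Set.Icc (0:ℝ) 1) := by
    apply antitoneOn_of_deriv_nonpos (convex_Icc 0 1)
    · exact Continuous.continuousOn (by
        have : Differentiable ℝ φ := fun t => (hφd t).differentiableAt
        exact this.continuous)
    · intro t ht
      exact (hφd t).differentiableAt.differentiableWithinAt
    · intro t ht
      rw [interior_Icc] at ht
      rw [(hφd t).deriv]
      have hineq : (inner ℝ (gradient f (x + t • v)) v : ℝ) - (inner ℝ (gradient f x) v : ℝ)
          ≤ L * (t * ‖v‖) * ‖v‖ := by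
        calc (inner ℝ (gradient f (x + t • v)) v : ℝ) - (inner ℝ (gradient f x) v : ℝ)
            = (inner ℝ (gradient f (x + t • v) - gradient f x) v : ℝ) := by
              rw [inner_sub_left]
          _ ≤ ‖gradient f (x + t • v) - gradient f x‖ * ‖v‖ :=
              real_inner_le_norm _ _
          _ ≤ L * (t * ‖v‖) * ‖v‖ := by
              have := hL t ⟨le_of_lt ht.1, le_of_lt ht.2⟩
              exact mul_le_mul_of_nonneg_right this (norm_nonneg v)
      nlinarith [hineq]
  have := hanti (Set.left_mem_Icc.2 zero_le_one) (Set.right_mem_Icc.2 zero_le_one) zero_le_one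
  have h0 : φ 0 = f x := by simp [hφ]
  have h1 : φ 1 = f y - (inner ℝ (gradient f x) v : ℝ) - L * ‖v‖ ^ 2 / 2 := by
    have : x + v = y := by rw [hv]; abel
    simp [hφ, this]
  rw [h0, h1] at this
  linarith

lemma gradF_hasGradient (f : E → ℝ) (hf : Differentiable ℝ f) (lam : ℝ) (x : E) :
    HasGradientAt (fun θ => f θ + lam / 2 * ‖θ‖ ^ 2) (gradient f x + lam • x) x := by
  rw [hasGradientAt_iff_hasFDerivAt]
  have h1 := (hf x).hasGradientAt.hasFDerivAt
  have hin := (hasFDerivAt_id x).inner ℝ (hasFDerivAt_id x)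
  have h2 := hin.const_mul (lam / 2)
  have heq : (fun θ : E => lam / 2 * ‖θ‖ ^ 2) = fun θ : E => lam / 2 * (inner ℝ θ θ : ℝ) := by
    funext θ
    rw [real_inner_self_eq_norm_sq]
  have h3 := h1.add (heq ▸ h2)
  refine h3.congr_fderiv ?_
  ext v
  simp [InnerProductSpace.toDual_apply_apply, fderivInnerCLM_apply, inner_add_left,
    real_inner_smul_left, real_inner_comm]
  ring

lemma stmt9_ball_descent {E : Type*} [NormedAddCommGroup E] [InnerProductSpace ℝ E]
    [CompleteSpace E] (f : E → ℝ) (hf : Differentiable ℝ f) (θ0 : E) (r0 β1 : ℝ)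
    (hLip : ∀ θ ∈ Metric.closedBall θ0 r0, ∀ θ' ∈ Metric.closedBall θ0 r0,
      ‖gradient f θ - gradient f θ'‖ ≤ β1 * ‖θ - θ'‖)
    (x : E) (hx : x ∈ Metric.closedBall θ0 r0) (y : E) (hy : y ∈ Metric.closedBall θ0 r0) :
    f y ≤ f x + (inner ℝ (gradient f x) (y - x) : ℝ) + β1 / 2 * ‖y - x‖ ^ 2 := by
  apply descent_lemma f hf β1 x y
  intro t ht
  have hp : x + t • (y - x) ∈ Metric.closedBall θ0 r0 := by
    have hconv := convex_closedBall θ0 r0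
    have h1 : (1 - t) • x + t • y ∈ Metric.closedBall θ0 r0 :=
      hconv hx hy (by linarith [ht.2]) ht.1 (by ring)
    have h2 : x + t • (y - x) = (1 - t) • x + t • y := by
      rw [smul_sub, sub_smul, one_smul]; abel
    rwa [h2]
  calc ‖gradient f (x + t • (y - x)) - gradient f x‖
      ≤ β1 * ‖x + t • (y - x) - x‖ := hLip _ hp _ hx
    _ = β1 * (t * ‖y - x‖) := by
        rw [add_sub_cancel_left, norm_smul, Real.norm_eq_abs, abs_of_nonneg ht.1]

lemma stmt9_quad_identity {E : Type*} [NormedAddCommGroup E] [InnerProductSpace ℝ E]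
    (lam : ℝ) (x y : E) :
    lam / 2 * ‖y‖ ^ 2 = lam / 2 * ‖x‖ ^ 2 + (inner ℝ ((lam : ℝ) • x) (y - x) : ℝ)
      + lam / 2 * ‖y - x‖ ^ 2 := by
  have h2 := norm_add_sq_real x (y - x)
  have h3 : x + (y - x) = y := by abel
  rw [h3] at h2
  rw [real_inner_smul_left]
  linear_combination (lam / 2) * h2

lemma stmt9_reg_descent {E : Type*} [NormedAddCommGroup E] [InnerProductSpace ℝ E]
    [CompleteSpace E] (f : E → ℝ) (hf : Differentiable ℝ f) (θ0 : E) (r0 β1 lam : ℝ)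
    (hLip : ∀ θ ∈ Metric.closedBall θ0 r0, ∀ θ' ∈ Metric.closedBall θ0 r0,
      ‖gradient f θ - gradient f θ'‖ ≤ β1 * ‖θ - θ'‖)
    (x : E) (hx : x ∈ Metric.closedBall θ0 r0) (y : E) (hy : y ∈ Metric.closedBall θ0 r0) :
    f y + lam / 2 * ‖y‖ ^ 2 ≤ f x + lam / 2 * ‖x‖ ^ 2
      + (inner ℝ (gradient f x + lam • x) (y - x) : ℝ) + (β1 + lam) / 2 * ‖y - x‖ ^ 2 := by
  have h1 := stmt9_ball_descent f hf θ0 r0 β1 hLip x hx y hy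
  have h2 := stmt9_quad_identity lam x y
  have h3 : (inner ℝ (gradient f x + lam • x) (y - x) : ℝ)
      = (inner ℝ (gradient f x) (y - x) : ℝ) + (inner ℝ ((lam:ℝ) • x) (y - x) : ℝ) :=
    inner_add_left _ _ _
  rw [h3]
  linarith [h1, h2]

lemma stmt9_grad_ub_far {E : Type*} [NormedAddCommGroup E] [InnerProductSpace ℝ E]
    [CompleteSpace E] (f : E → ℝ) (hf : Differentiable ℝ f) (hnn : ∀ z, 0 ≤ f z)
    (θ0 : E) (r0 β1 : ℝ) (hβ1 : 0 < β1)
    (hLip : ∀ θ ∈ Metric.closedBall θ0 r0, ∀ θ' ∈ Metric.closedBall θ0 r0,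
      ‖gradient f θ - gradient f θ'‖ ≤ β1 * ‖θ - θ'‖)
    (x : E) (hx : x ∈ Metric.closedBall θ0 r0)
    (hδpos : 0 < r0 - ‖x - θ0‖)
    (hg : β1 * (r0 - ‖x - θ0‖) < ‖gradient f x‖) :
    (r0 - ‖x - θ0‖) * ‖gradient f x‖ ≤ 2 * f x := by
  set δ := r0 - ‖x - θ0‖ with hδ
  clear_value δ
  have hgpos : 0 < ‖gradient f x‖ := lt_trans (by positivity) hg
  have hyB : x - (δ / ‖gradient f x‖) • gradient f x ∈ Metric.closedBall θ0 r0 := by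
    rw [Metric.mem_closedBall, dist_eq_norm]
    have h1 : x - (δ / ‖gradient f x‖) • gradient f x - θ0
        = (x - θ0) + (-((δ / ‖gradient f x‖) • gradient f x)) := by abel
    rw [h1]
    have h2 := norm_add_le (x - θ0) (-((δ / ‖gradient f x‖) • gradient f x))
    rw [norm_neg, norm_smul, Real.norm_eq_abs,
      abs_of_nonneg (by positivity : (0:ℝ) ≤ δ / ‖gradient f x‖),
      div_mul_cancel₀ _ hgpos.ne'] at h2
    linarith [h2]
  have hd := stmt9_ball_descent f hf θ0 r0 β1 hLip x hx _ hyB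
  have h1 : x - (δ / ‖gradient f x‖) • gradient f x - x
      = -((δ / ‖gradient f x‖) • gradient f x) := by abel
  rw [h1, inner_neg_right, real_inner_smul_right, real_inner_self_eq_norm_sq,
    norm_neg, norm_smul, Real.norm_eq_abs,
    abs_of_nonneg (by positivity : (0:ℝ) ≤ δ / ‖gradient f x‖)] at hd
  have ht : δ / ‖gradient f x‖ * ‖gradient f x‖ ^ 2 = δ * ‖gradient f x‖ := by
    field_simp
  have ht2 : (δ / ‖gradient f x‖ * ‖gradient f x‖) ^ 2 = δ ^ 2 := by
    rw [div_mul_cancel₀ _ hgpos.ne']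
  rw [ht, ht2] at hd
  have hnn' := hnn (x - (δ / ‖gradient f x‖) • gradient f x)
  -- 0 ≤ f x - δ‖g‖ + β1/2 δ² and β1 δ < ‖g‖, δ > 0
  nlinarith [hd, hnn', mul_lt_mul_of_pos_right hg hδpos]

lemma stmt9_grad_ub_near {E : Type*} [NormedAddCommGroup E] [InnerProductSpace ℝ E]
    [CompleteSpace E] (f : E → ℝ) (hf : Differentiable ℝ f) (hnn : ∀ z, 0 ≤ f z)
    (θ0 : E) (r0 β1 : ℝ) (hβ1 : 0 < β1)
    (hLip : ∀ θ ∈ Metric.closedBall θ0 r0, ∀ θ' ∈ Metric.closedBall θ0 r0,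
      ‖gradient f θ - gradient f θ'‖ ≤ β1 * ‖θ - θ'‖)
    (x : E) (hx : x ∈ Metric.closedBall θ0 r0)
    (hg : ‖gradient f x‖ ≤ β1 * (r0 - ‖x - θ0‖)) :
    ‖gradient f x‖ ^ 2 ≤ 2 * β1 * f x := by
  have hyB : x - (1 / β1) • gradient f x ∈ Metric.closedBall θ0 r0 := by
    rw [Metric.mem_closedBall, dist_eq_norm]
    have h1 : x - (1 / β1) • gradient f x - θ0
        = (x - θ0) + (-((1 / β1) • gradient f x)) := by abel
    rw [h1]
    have h2 := norm_add_le (x - θ0) (-((1 / β1) • gradient f x))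
    rw [norm_neg, norm_smul, Real.norm_eq_abs,
      abs_of_nonneg (by positivity : (0:ℝ) ≤ 1 / β1)] at h2
    have h3 : 1 / β1 * ‖gradient f x‖ ≤ r0 - ‖x - θ0‖ := by
      rw [div_mul_eq_mul_div, one_mul, div_le_iff₀ hβ1]
      nlinarith [hg]
    linarith [h2, h3]
  have hd := stmt9_ball_descent f hf θ0 r0 β1 hLip x hx _ hyB
  have h1 : x - (1 / β1) • gradient f x - x = -((1 / β1) • gradient f x) := by abel
  rw [h1, inner_neg_right, real_inner_smul_right, real_inner_self_eq_norm_sq,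
    norm_neg, norm_smul, Real.norm_eq_abs,
    abs_of_nonneg (by positivity : (0:ℝ) ≤ 1 / β1)] at hd
  have hnn' := hnn (x - (1 / β1) • gradient f x)
  have hd2 : 0 ≤ f x - 1 / β1 * ‖gradient f x‖ ^ 2
      + β1 / 2 * (1 / β1 * ‖gradient f x‖) ^ 2 := by nlinarith [hd, hnn']
  have hgid : ‖gradient f x‖ ^ 2
      = 2 * β1 * (1 / β1 * ‖gradient f x‖ ^ 2
        - β1 / 2 * (1 / β1 * ‖gradient f x‖) ^ 2) := by
    field_simp
    ring
  rw [hgid]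
  have h2 : 1 / β1 * ‖gradient f x‖ ^ 2
      - β1 / 2 * (1 / β1 * ‖gradient f x‖) ^ 2 ≤ f x := by linarith [hd2]
  nlinarith [h2, hβ1]

set_option maxHeartbeats 1000000 in
lemma stmt9_step {E : Type*} [NormedAddCommGroup E] [InnerProductSpace ℝ E]
    [CompleteSpace E] (C0 : E → ℝ) (θ0 : E) (r0 α lam β1 η : ℝ)
    (hr0 : 0 < r0) (hα : 0 < α) (hlam : 0 < lam) (hβ1 : 0 < β1) (hη0 : 0 < η)
    (hC0nonneg : ∀ z, 0 ≤ C0 z) (hdiff : Differentiable ℝ C0)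
    (hPL : ∀ θ ∈ Metric.closedBall θ0 r0, (α / 2) * C0 θ ≤ ‖gradient C0 θ‖ ^ 2)
    (hLip : ∀ θ ∈ Metric.closedBall θ0 r0, ∀ θ' ∈ Metric.closedBall θ0 r0,
      ‖gradient C0 θ - gradient C0 θ'‖ ≤ β1 * ‖θ - θ'‖)
    (hlam20 : 20 * lam ≤ α) (hηβ : η * β1 ≤ 1 / 2) (hηα : η * α ≤ 2)
    (hηlam : η * lam ≤ 1 / 10)
    (mm ρ : ℝ) (hmmR : lam * (‖θ0‖ + r0) ^ 2 ≤ mm) (hρnn : 0 ≤ ρ) (hρr : 8 * ρ ≤ r0)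
    (x y : E) (hy : y = x - η • (gradient C0 x + lam • x))
    (hx : ‖x - θ0‖ ≤ 20 / 3 * (ρ - Real.sqrt ((C0 x + lam / 2 * ‖x‖ ^ 2) / α)))
    (hFk : 2 * mm < C0 x + lam / 2 * ‖x‖ ^ 2) :
    ‖y - θ0‖ ≤ ‖x - θ0‖ + 20 / 3 * (Real.sqrt ((C0 x + lam / 2 * ‖x‖ ^ 2) / α)
        - Real.sqrt ((C0 y + lam / 2 * ‖y‖ ^ 2) / α)) ∧
      C0 y + lam / 2 * ‖y‖ ^ 2 ≤ (1 - η * α / 8) * (C0 x + lam / 2 * ‖x‖ ^ 2) := by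
  have hFxnn : 0 ≤ C0 x + lam / 2 * ‖x‖ ^ 2 := by
    have := hC0nonneg x; positivity
  have hFynn : 0 ≤ C0 y + lam / 2 * ‖y‖ ^ 2 := by
    have := hC0nonneg y; positivity
  set Fx : ℝ := C0 x + lam / 2 * ‖x‖ ^ 2 with hFxdef
  set Fy : ℝ := C0 y + lam / 2 * ‖y‖ ^ 2 with hFydef
  set sx : ℝ := Real.sqrt (Fx / α) with hsxdef
  set sy : ℝ := Real.sqrt (Fy / α) with hsydef
  have hsxnn : 0 ≤ sx := Real.sqrt_nonneg _
  have hsynn : 0 ≤ sy := Real.sqrt_nonneg _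
  have hsxsq : α * sx ^ 2 = Fx := by
    rw [hsxdef, Real.sq_sqrt (div_nonneg hFxnn hα.le)]; field_simp
  have hsysq : α * sy ^ 2 = Fy := by
    rw [hsydef, Real.sq_sqrt (div_nonneg hFynn hα.le)]; field_simp
  have hmm0 : 0 < mm := lt_of_lt_of_le (by positivity) hmmR
  have hsxpos : 0 < sx := by
    rcases lt_or_eq_of_le hsxnn with h | h
    · exact h
    · exfalso
      rw [← h] at hsxsq
      simp only [ne_eq, OfNat.ofNat_ne_zero, not_false_eq_true, zero_pow, mul_zero] at hsxsq
      linarith only [hsxsq, hFk, hmm0]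
  clear_value Fx Fy sx sy
  have hC0xFx : C0 x ≤ Fx := by
    have h0 : 0 ≤ lam / 2 * ‖x‖ ^ 2 := by positivity
    rw [hFxdef]; linarith only [h0]
  -- x is in the ball
  have hxb : ‖x - θ0‖ ≤ r0 := by linarith only [hx, hsxnn, hρnn, hρr]
  have hxball : x ∈ Metric.closedBall θ0 r0 := by
    rw [Metric.mem_closedBall, dist_eq_norm]; exact hxb
  have hxnorm : ‖x‖ ≤ ‖θ0‖ + r0 := by
    have h1 : x = θ0 + (x - θ0) := by abel
    calc ‖x‖ = ‖θ0 + (x - θ0)‖ := by rw [← h1]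
      _ ≤ ‖θ0‖ + ‖x - θ0‖ := norm_add_le _ _
      _ ≤ ‖θ0‖ + r0 := by linarith only [hxb]
  have hlamx2 : lam * ‖x‖ ^ 2 ≤ Fx / 2 := by
    have h1 : lam * ‖x‖ ^ 2 ≤ lam * (‖θ0‖ + r0) ^ 2 := by
      nlinarith only [mul_self_le_mul_self (norm_nonneg x) hxnorm, hlam]
    linarith only [h1, hmmR, hFk]
  have hC0x : 3 / 4 * Fx ≤ C0 x := by
    have h0 : Fx = C0 x + lam / 2 * ‖x‖ ^ 2 := hFxdef
    linarith only [hlamx2, h0]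
  have hgsq := hPL x hxball
  have hαFx : α * Fx = (α * sx) ^ 2 := by rw [← hsxsq]; ring
  have hb2 : 3 / 8 * (α * sx) ^ 2 ≤ ‖gradient C0 x‖ ^ 2 := by
    nlinarith only [hgsq, mul_le_mul_of_nonneg_left hC0x (by positivity : (0:ℝ) ≤ α / 2), hαFx]
  have hg_lb : 3 / 5 * (α * sx) ≤ ‖gradient C0 x‖ := by
    nlinarith only [hb2, norm_nonneg (gradient C0 x), mul_nonneg hα.le hsxnn]
  have hlx_ub : lam * ‖x‖ ≤ 1 / 6 * (α * sx) := by
    have h1 : lam * (lam * ‖x‖ ^ 2) ≤ lam * (Fx / 2) := mul_le_mul_of_nonneg_left hlamx2 hlam.le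
    have h2 : lam * (Fx / 2) ≤ α / 20 * (Fx / 2) := by nlinarith only [hlam20, hFxnn]
    nlinarith only [h1, h2, hαFx, mul_nonneg hlam.le (norm_nonneg x), mul_nonneg hα.le hsxnn]
  have htri : ‖gradient C0 x‖ ≤ ‖gradient C0 x + lam • x‖ + lam * ‖x‖ := by
    have h1 : gradient C0 x = (gradient C0 x + lam • x) - lam • x := by abel
    calc ‖gradient C0 x‖ = ‖(gradient C0 x + lam • x) - lam • x‖ := by rw [← h1]
      _ ≤ ‖gradient C0 x + lam • x‖ + ‖lam • x‖ := norm_sub_le _ _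
      _ = ‖gradient C0 x + lam • x‖ + lam * ‖x‖ := by
          rw [norm_smul, Real.norm_eq_abs, abs_of_pos hlam]
  have hG_lb : 3 / 7 * (α * sx) ≤ ‖gradient C0 x + lam • x‖ := by
    have hcnn : 0 ≤ α * sx := mul_nonneg hα.le hsxnn
    linarith only [hg_lb, hlx_ub, htri, hcnn]
  have hδ : 4 / 3 * ρ + 20 / 3 * sx ≤ r0 - ‖x - θ0‖ := by linarith only [hx, hρr]
  have hδpos : 0 < r0 - ‖x - θ0‖ := by linarith only [hδ, hρnn, hsxpos]
  -- the gradient step stays inside the ball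
  have hηglam : η * (lam * ‖x‖) ≤ 1 / 3 * sx := by
    have h1 := mul_le_mul_of_nonneg_left hlx_ub hη0.le
    have h2 := mul_le_mul_of_nonneg_right hηα hsxnn
    nlinarith only [h1, h2]
  have hGtri : ‖gradient C0 x + lam • x‖ ≤ ‖gradient C0 x‖ + lam * ‖x‖ := by
    calc ‖gradient C0 x + lam • x‖ ≤ ‖gradient C0 x‖ + ‖lam • x‖ := norm_add_le _ _
      _ = ‖gradient C0 x‖ + lam * ‖x‖ := by
          rw [norm_smul, Real.norm_eq_abs, abs_of_pos hlam]
  have hηG : η * ‖gradient C0 x + lam • x‖ ≤ r0 - ‖x - θ0‖ := by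
    by_cases hcase : ‖gradient C0 x‖ ≤ β1 * (r0 - ‖x - θ0‖)
    · have h1 : η * ‖gradient C0 x‖ ≤ 1 / 2 * (r0 - ‖x - θ0‖) := by
        have h2 := mul_le_mul_of_nonneg_left hcase hη0.le
        nlinarith only [h2, mul_le_mul_of_nonneg_right hηβ hδpos.le]
      have h3 := mul_le_mul_of_nonneg_left hGtri hη0.le
      have hsxδ : sx ≤ 3 / 20 * (r0 - ‖x - θ0‖) := by linarith only [hδ, hρnn]
      nlinarith only [h1, h3, hηglam, hsxδ, hδpos]
    · push_neg at hcase
      have hfar := stmt9_grad_ub_far C0 hdiff hC0nonneg θ0 r0 β1 hβ1 hLip x hxball hδpos hcase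
      have hA : η * ‖gradient C0 x‖ * (r0 - ‖x - θ0‖) ≤ 4 * sx ^ 2 := by
        have h1 := mul_le_mul_of_nonneg_left hfar hη0.le
        have h2 := mul_le_mul_of_nonneg_right hηα (sq_nonneg sx)
        nlinarith only [h1, h2, hsxsq, hη0.le,
          mul_le_mul_of_nonneg_left hC0xFx hη0.le]
      have hB : 4 * sx ^ 2 ≤ 3 / 5 * sx * (r0 - ‖x - θ0‖) := by
        have h1 := mul_le_mul_of_nonneg_left hδ (by positivity : (0:ℝ) ≤ 3 / 5 * sx)
        nlinarith only [h1, mul_nonneg hρnn hsxnn]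
      have h1 : η * ‖gradient C0 x‖ ≤ 3 / 5 * sx :=
        le_of_mul_le_mul_right (by linarith only [hA, hB]) hδpos
      have h3 := mul_le_mul_of_nonneg_left hGtri hη0.le
      have hsxδ : sx ≤ 3 / 20 * (r0 - ‖x - θ0‖) := by linarith only [hδ, hρnn]
      nlinarith only [h1, h3, hηglam, hsxδ, hδpos, hsxnn]
  have hytri : ‖y - θ0‖ ≤ ‖x - θ0‖ + η * ‖gradient C0 x + lam • x‖ := by
    have h1 : y - θ0 = (x - θ0) + (-(η • (gradient C0 x + lam • x))) := by
      rw [hy]; abel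
    calc ‖y - θ0‖ = ‖(x - θ0) + (-(η • (gradient C0 x + lam • x)))‖ := by rw [← h1]
      _ ≤ ‖x - θ0‖ + ‖-(η • (gradient C0 x + lam • x))‖ := norm_add_le _ _
      _ = ‖x - θ0‖ + η * ‖gradient C0 x + lam • x‖ := by
          rw [norm_neg, norm_smul, Real.norm_eq_abs, abs_of_pos hη0]
  have hyball : y ∈ Metric.closedBall θ0 r0 := by
    rw [Metric.mem_closedBall, dist_eq_norm]
    linarith only [hytri, hηG]
  -- the descent inequality
  have hFd := stmt9_reg_descent C0 hdiff θ0 r0 β1 lam hLip x hxball y hyball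
  have hyx : y - x = -(η • (gradient C0 x + lam • x)) := by rw [hy]; abel
  rw [hyx, inner_neg_right, real_inner_smul_right, real_inner_self_eq_norm_sq,
    norm_neg, norm_smul, Real.norm_eq_abs, abs_of_pos hη0] at hFd
  have hFd2 : Fy ≤ Fx - η * ‖gradient C0 x + lam • x‖ ^ 2
      + (β1 + lam) / 2 * (η * ‖gradient C0 x + lam • x‖) ^ 2 := by
    rw [hFxdef, hFydef]; linarith only [hFd]
  have hc : η * (β1 + lam) ≤ 3 / 5 := by linarith only [hηβ, hηlam]
  have hFd3 : Fy ≤ Fx - 7 / 10 * (η * ‖gradient C0 x + lam • x‖ ^ 2) := by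
    nlinarith only [hFd2, mul_le_mul_of_nonneg_right hc
      (mul_nonneg hη0.le (sq_nonneg ‖gradient C0 x + lam • x‖))]
  have hGsq : (3 / 7 * (α * sx)) ^ 2 ≤ ‖gradient C0 x + lam • x‖ ^ 2 := by
    nlinarith only [hG_lb, mul_nonneg hα.le hsxnn]
  have hcontr : Fy ≤ (1 - η * α / 8) * Fx := by
    have h1 := mul_le_mul_of_nonneg_left hGsq hη0.le
    have hηαFx : η * α * (α * sx ^ 2) = η * α * Fx := by rw [hsxsq]
    nlinarith only [hFd3, h1, hηαFx, mul_nonneg (mul_nonneg hη0.le hα.le) hFxnn]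
  refine ⟨?_, by rw [hFxdef, hFydef] at hcontr ⊢; exact hcontr⟩
  -- telescoping displacement bound
  have hFy_le : Fy ≤ Fx := by
    linarith only [hFd3, mul_nonneg hη0.le (sq_nonneg ‖gradient C0 x + lam • x‖)]
  have hsyx : sy ≤ sx := by
    have hsq : sy ^ 2 ≤ sx ^ 2 := by nlinarith only [hsxsq, hsysq, hFy_le, hα]
    nlinarith only [hsq, hsxnn, hsynn]
  have hGpos : 0 < ‖gradient C0 x + lam • x‖ :=
    lt_of_lt_of_le (by positivity) hG_lb
  have htel : η * ‖gradient C0 x + lam • x‖ ≤ 20 / 3 * (sx - sy) := by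
    have hMul : η * ‖gradient C0 x + lam • x‖ * (3 / 7 * (α * sx))
        ≤ 20 / 3 * (sx - sy) * (3 / 7 * (α * sx)) := by
      have h1 := mul_le_mul_of_nonneg_left hG_lb
        (mul_nonneg hη0.le (norm_nonneg (gradient C0 x + lam • x)))
      nlinarith only [hFd3, hsxsq, hsysq, h1, mul_nonneg hα.le (sq_nonneg (sx - sy)), hsyx,
        mul_nonneg hη0.le (norm_nonneg (gradient C0 x + lam • x))]
    exact le_of_mul_le_mul_right hMul (by positivity)
  linarith only [hytri, htel]

set_option maxHeartbeats 1000000 in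
/-- Proposition 4.2, second part: exponential convergence of gradient
descent on the `λ`-regularized cost, under the PL inequality and a Lipschitz gradient. -/
theorem statement9
    (P : ℕ)
    (C0 : EuclideanSpace ℝ (Fin P) → ℝ)
    (θ0 : EuclideanSpace ℝ (Fin P))
    (r0 α lam β1 η : ℝ)
    (hr0 : 0 < r0) (hα : 0 < α) (hlam : 0 < lam) (hβ1 : 0 < β1)
    (hC0nonneg : ∀ θ, 0 ≤ C0 θ)
    (hdiff : Differentiable ℝ C0)
    -- the α-PL inequality on the ball
    (hPL : ∀ θ ∈ Metric.closedBall θ0 r0, (α / 2) * C0 θ ≤ ‖gradient C0 θ‖ ^ 2)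
    -- ∇C0 is β1-Lipschitz on the ball
    (hLip : ∀ θ ∈ Metric.closedBall θ0 r0, ∀ θ' ∈ Metric.closedBall θ0 r0,
      ‖gradient C0 θ - gradient C0 θ'‖ ≤ β1 * ‖θ - θ'‖)
    -- the radius is large enough
    (hrad : 8 * Real.sqrt ((C0 θ0 + (lam / 2) * ‖θ0‖ ^ 2) / α) ≤ r0)
    -- the initial regularized loss is above the plateau value
    (hinit : 2 * lam * ((1 + Real.sqrt (4 * lam / α)) ^ 2 * (‖θ0‖ + r0) ^ 2) <
      C0 θ0 + (lam / 2) * ‖θ0‖ ^ 2)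
    (hη0 : 0 < η) (hη : η < 1 / (2 * β1))
    -- gradient descent on the regularized loss
    (θs : ℕ → EuclideanSpace ℝ (Fin P))
    (hθs0 : θs 0 = θ0)
    (hstep : ∀ k, θs (k + 1) =
      θs k - η • gradient (fun θ => C0 θ + (lam / 2) * ‖θ‖ ^ 2) (θs k)) :
    ∃ k1 : ℕ,
      k1 ≤ ⌈Real.log (lam * ((1 + Real.sqrt (4 * lam / α)) ^ 2 * (‖θ0‖ + r0) ^ 2) /
              ((C0 θ0 + (lam / 2) * ‖θ0‖ ^ 2) -
                lam * ((1 + Real.sqrt (4 * lam / α)) ^ 2 * (‖θ0‖ + r0) ^ 2))) /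
            Real.log (1 - η * α / 8)⌉₊ ∧
      C0 (θs k1) + (lam / 2) * ‖θs k1‖ ^ 2 ≤
        2 * lam * ((1 + Real.sqrt (4 * lam / α)) ^ 2 * (‖θ0‖ + r0) ^ 2) ∧
      ‖θs k1 - θ0‖ ≤ 8 * Real.sqrt ((C0 θ0 + (lam / 2) * ‖θ0‖ ^ 2) / α) ∧
      8 * Real.sqrt ((C0 θ0 + (lam / 2) * ‖θ0‖ ^ 2) / α) ≤ r0 := by
  classical
  -- gradient-step recursion in explicit form
  have hstep' : ∀ k, θs (k + 1) = θs k - η • (gradient C0 (θs k) + lam • θs k) := by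
    intro k
    rw [hstep k, (gradF_hasGradient C0 hdiff lam (θs k)).gradient]
  set m : ℝ := (1 + Real.sqrt (4 * lam / α)) ^ 2 * (‖θ0‖ + r0) ^ 2 with hm
  set c0 : ℝ := C0 θ0 + lam / 2 * ‖θ0‖ ^ 2 with hc0
  set q : ℝ := η * α / 8 with hqdef
  set N : ℕ := ⌈Real.log (lam * m / (c0 - lam * m)) / Real.log (1 - q)⌉₊ with hN
  set ρ : ℝ := Real.sqrt (c0 / α) with hρ
  have hssq : Real.sqrt (4 * lam / α) ^ 2 = 4 * lam / α := Real.sq_sqrt (by positivity)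
  have hs0 : 0 ≤ Real.sqrt (4 * lam / α) := Real.sqrt_nonneg _
  have hmpos : 0 < m := by rw [hm]; positivity
  have hρnn : 0 ≤ ρ := by rw [hρ]; exact Real.sqrt_nonneg _
  have hc0nn : 0 ≤ c0 := by
    rw [hc0]
    have := hC0nonneg θ0
    positivity
  have hρsq : α * ρ ^ 2 = c0 := by
    rw [hρ, Real.sq_sqrt (by positivity)]
    field_simp
  have hRm : (‖θ0‖ + r0) ^ 2 ≤ m := by
    rw [hm]
    nlinarith only [mul_nonneg hs0 (sq_nonneg (‖θ0‖ + r0)),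
      mul_nonneg (mul_nonneg hs0 hs0) (sq_nonneg (‖θ0‖ + r0))]
  have hαs : α * Real.sqrt (4 * lam / α) ^ 2 = 4 * lam := by
    rw [hssq]; field_simp
  have hml : 4 * lam * r0 ^ 2 ≤ α * m := by
    have hr2 : r0 ^ 2 ≤ (‖θ0‖ + r0) ^ 2 := by nlinarith only [norm_nonneg θ0, hr0]
    have h1 : α * Real.sqrt (4 * lam / α) ^ 2 * (‖θ0‖ + r0) ^ 2 ≤ α * m := by
      rw [hm]
      nlinarith only [mul_nonneg (mul_nonneg hα.le hs0) (sq_nonneg (‖θ0‖ + r0)),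
        mul_nonneg hα.le (sq_nonneg (‖θ0‖ + r0))]
    rw [hαs] at h1
    nlinarith only [h1, hlam, hr2]
  clear_value m c0 q N ρ
  have hinit' : 2 * lam * m < c0 := hinit
  have hρr : 8 * ρ ≤ r0 := hrad
  have hc0pos : 0 < c0 := lt_trans (by positivity) hinit'
  have hc064 : 64 * c0 ≤ α * r0 ^ 2 := by
    have h8 : (8 * ρ) * (8 * ρ) ≤ r0 * r0 := mul_self_le_mul_self (by positivity) hρr
    nlinarith only [hρsq, h8, hα.le]
  have hlam20 : 20 * lam ≤ α := by
    have h2 : 512 * lam ^ 2 * r0 ^ 2 < α ^ 2 * r0 ^ 2 := by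
      nlinarith only [hml, hinit', hc064, hα, hlam]
    have h3 : 512 * lam ^ 2 < α ^ 2 :=
      lt_of_mul_lt_mul_right (by nlinarith only [h2]) (by positivity : (0:ℝ) ≤ r0 ^ 2)
    nlinarith only [h3, hlam, hα]
  -- eta bounds
  have hη2 : η * (2 * β1) < 1 := by
    rw [lt_div_iff₀ (by positivity : (0:ℝ) < 2 * β1)] at hη
    exact hη
  have hηβ : η * β1 ≤ 1 / 2 := by linarith only [hη2]
  have hθ0B : θ0 ∈ Metric.closedBall θ0 r0 := Metric.mem_closedBall_self hr0.le
  have hθ0R : ‖θ0‖ ^ 2 ≤ (‖θ0‖ + r0) ^ 2 := by nlinarith only [norm_nonneg θ0, hr0]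
  have hC0θ0pos : 0 < C0 θ0 := by
    have h3 : C0 θ0 = c0 - lam / 2 * ‖θ0‖ ^ 2 := by rw [hc0]; ring
    rw [h3]
    nlinarith only [hinit', mul_le_mul_of_nonneg_left hθ0R hlam.le,
      mul_le_mul_of_nonneg_left hRm hlam.le, mul_nonneg hlam.le (sq_nonneg ‖θ0‖)]
  have hC0θ0c0 : C0 θ0 ≤ c0 := by
    rw [hc0]
    nlinarith only [norm_nonneg θ0, hlam]
  -- alpha is at most 4*beta1
  have hab : α ≤ 4 * β1 := by
    have hPL0 := hPL θ0 hθ0B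
    by_cases hcase : ‖gradient C0 θ0‖ ≤ β1 * r0
    · have hnear := stmt9_grad_ub_near C0 hdiff hC0nonneg θ0 r0 β1 hβ1 hLip θ0 hθ0B
        (by simpa [sub_self] using hcase)
      nlinarith only [hPL0, hnear, hC0θ0pos]
    · push_neg at hcase
      have hfar := stmt9_grad_ub_far C0 hdiff hC0nonneg θ0 r0 β1 hβ1 hLip θ0 hθ0B
        (by simpa [sub_self] using hr0) (by simpa [sub_self] using hcase)
      rw [sub_self, norm_zero, sub_zero] at hfar
      have h5 : α / 2 * C0 θ0 * r0 ^ 2 ≤ (r0 * ‖gradient C0 θ0‖) ^ 2 := by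
        nlinarith only [hPL0, sq_nonneg r0]
      have h6 : (r0 * ‖gradient C0 θ0‖) ^ 2 ≤ 4 * C0 θ0 ^ 2 := by
        nlinarith only [hfar, mul_nonneg hr0.le (norm_nonneg (gradient C0 θ0)), hC0θ0pos]
      have h7 : α * r0 ^ 2 ≤ 8 * C0 θ0 := by nlinarith only [h5, h6, hC0θ0pos]
      linarith only [hc064, h7, hC0θ0c0, hc0pos]
  have hηα : η * α ≤ 2 := by nlinarith only [hηβ, hab, hη0]
  have hηlam : η * lam ≤ 1 / 10 := by nlinarith only [hηα, hlam20, hη0]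
  have hq0 : 0 < q := by rw [hqdef]; positivity
  have hq14 : q ≤ 1 / 4 := by rw [hqdef]; linarith only [hηα]
  have hmmR : lam * (‖θ0‖ + r0) ^ 2 ≤ lam * m := mul_le_mul_of_nonneg_left hRm hlam.le
  have hlmnn : 0 ≤ lam * m := by positivity
  -- the key induction
  have key : ∀ k : ℕ,
      (∀ j, j < k → 2 * lam * m < C0 (θs j) + lam / 2 * ‖θs j‖ ^ 2) →
      ‖θs k - θ0‖ ≤ 20 / 3 * (ρ - Real.sqrt ((C0 (θs k) + lam / 2 * ‖θs k‖ ^ 2) / α)) ∧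
      C0 (θs k) + lam / 2 * ‖θs k‖ ^ 2 - lam * m ≤ (1 - q) ^ k * (c0 - lam * m) := by
    intro k
    induction k with
    | zero =>
      intro _
      constructor
      · rw [hθs0, ← hc0, ← hρ, sub_self, norm_zero]
        simp
      · rw [hθs0, ← hc0, pow_zero, one_mul]
    | succ k IH =>
      intro hk
      obtain ⟨hI1, hI2⟩ := IH (fun j hj => hk j (Nat.lt_succ_of_lt hj))
      have hFk : 2 * lam * m < C0 (θs k) + lam / 2 * ‖θs k‖ ^ 2 := hk k (Nat.lt_succ_self k)
      obtain ⟨hs1, hs2⟩ := stmt9_step C0 θ0 r0 α lam β1 η hr0 hα hlam hβ1 hη0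
        hC0nonneg hdiff hPL hLip hlam20 hηβ hηα hηlam (lam * m) ρ hmmR hρnn hρr
        (θs k) (θs (k + 1)) (hstep' k) hI1 (by linarith only [hFk])
      constructor
      · linarith only [hs1, hI1]
      · have h1q : 0 ≤ 1 - q := by linarith only [hq14]
        have ha : C0 (θs (k + 1)) + lam / 2 * ‖θs (k + 1)‖ ^ 2
            ≤ (1 - q) * (C0 (θs k) + lam / 2 * ‖θs k‖ ^ 2) := by
          rw [hqdef]; exact hs2
        have hb : (1 - q) * (C0 (θs k) + lam / 2 * ‖θs k‖ ^ 2 - lam * m)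
            ≤ (1 - q) * ((1 - q) ^ k * (c0 - lam * m)) :=
          mul_le_mul_of_nonneg_left hI2 h1q
        have hc : C0 (θs (k + 1)) + lam / 2 * ‖θs (k + 1)‖ ^ 2 - lam * m
            ≤ (1 - q) * (C0 (θs k) + lam / 2 * ‖θs k‖ ^ 2 - lam * m) := by
          nlinarith only [ha, mul_nonneg hq0.le hlmnn]
        calc C0 (θs (k + 1)) + lam / 2 * ‖θs (k + 1)‖ ^ 2 - lam * m
            ≤ (1 - q) * ((1 - q) ^ k * (c0 - lam * m)) := le_trans hc hb
          _ = (1 - q) ^ (k + 1) * (c0 - lam * m) := by rw [pow_succ]; ring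
  -- the number of steps needed
  have hgap : 0 < c0 - lam * m := by nlinarith only [hinit', hlam, hmpos]
  have hlmpos : 0 < lam * m := mul_pos hlam hmpos
  have hNle : (1 - q) ^ N * (c0 - lam * m) ≤ lam * m := by
    have hrpos : 0 < lam * m / (c0 - lam * m) := div_pos hlmpos hgap
    have hr1 : lam * m / (c0 - lam * m) < 1 := by
      rw [div_lt_one hgap]
      linarith only [hinit']
    have hlogq : Real.log (1 - q) < 0 :=
      Real.log_neg (by linarith only [hq14]) (by linarith only [hq0])
    have hceil : Real.log (lam * m / (c0 - lam * m)) / Real.log (1 - q) ≤ (N : ℝ) := by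
      rw [hN]; exact Nat.le_ceil _
    have hNlog : (N : ℝ) * Real.log (1 - q) ≤ Real.log (lam * m / (c0 - lam * m)) := by
      rwa [div_le_iff_of_neg hlogq] at hceil
    have hpow : (1 - q) ^ N ≤ lam * m / (c0 - lam * m) := by
      have h2 : Real.log ((1 - q) ^ N) ≤ Real.log (lam * m / (c0 - lam * m)) := by
        rw [Real.log_pow]
        exact_mod_cast hNlog
      have h3 : (0:ℝ) < (1 - q) ^ N := pow_pos (by linarith only [hq14]) N
      calc (1 - q) ^ N = Real.exp (Real.log ((1 - q) ^ N)) := (Real.exp_log h3).symm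
        _ ≤ Real.exp (Real.log (lam * m / (c0 - lam * m))) := Real.exp_le_exp.2 h2
        _ = lam * m / (c0 - lam * m) := Real.exp_log hrpos
    have h4 := mul_le_mul_of_nonneg_right hpow hgap.le
    rwa [div_mul_cancel₀ _ hgap.ne'] at h4
  have hex : ∃ k, k ≤ N ∧ C0 (θs k) + lam / 2 * ‖θs k‖ ^ 2 ≤ 2 * lam * m := by
    by_contra hcon
    push_neg at hcon
    have hKey := key N (fun j hj => hcon j (le_of_lt hj))
    have hTN := hcon N le_rfl
    linarith only [hNle, hKey.2, hTN]
  obtain ⟨hk1N, hk1T⟩ := Nat.find_spec hex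
  have hmin : ∀ j, j < Nat.find hex → 2 * lam * m < C0 (θs j) + lam / 2 * ‖θs j‖ ^ 2 := by
    intro j hj
    have h := Nat.find_min hex hj
    push_neg at h
    exact h (le_trans (le_of_lt hj) hk1N)
  have hfin := key (Nat.find hex) hmin
  refine ⟨Nat.find hex, hk1N, hk1T, ?_, hρr⟩
  have hsnn := Real.sqrt_nonneg ((C0 (θs (Nat.find hex))
    + lam / 2 * ‖θs (Nat.find hex)‖ ^ 2) / α)
  linarith only [hfin.1, hsnn, hρnn]
end
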